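/- arXiv:2209.03054 — 2 statements merged into one kernel-verified Lean document; each statement's English description precedes it below -/
import Mathlib

section
/- Suppose u : 2^[n] → ℝ≥0 is a normalized, monotone, submodular and second-order supermodular set function and c : 2^[n] → ℝ≥0 is modular with positive singleton costs c_1,…,c_n. Let L be a permutation of [n] that is locally optimal with respect to insertions and let O be a permutation of [n] of minimum objective value. Then for all i, j ∈ [n]: Σ_{r=j}^n c(L_r)·Σ_{s=1}^n b_{sr} ≤ [c({o_i}) + c(L_{j−1})]·Σ_{r=j}^n b_{ir} + Σ_{r=j}^n [c({o_i}) + c(L_r)]·Σ_{s=1, s≠i}^n b_{sr}. -/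
open Finset

/-- The set of the first `k` elements of the list `L`. -/
def prefSet {n : ℕ} (L : List (Fin n)) (k : ℕ) : Finset (Fin n) := (L.take k).toFinset

/-- Marginal value `f(e|S) = f(S ∪ {e}) - f S`. -/
noncomputable def marg {n : ℕ} (f : Finset (Fin n) → ℝ) (e : Fin n) (S : Finset (Fin n)) : ℝ :=
  f (insert e S) - f S

/-- `L` is a listing of all elements of `[n]` (a permutation of `[n]`). -/
def IsPermList {n : ℕ} (L : List (Fin n)) : Prop := L.Nodup ∧ ∀ x : Fin n, x ∈ L

/-- The objective value `∑_{i=1}^n c(S_i)(u(S_i) - u(S_{i-1}))`. -/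
noncomputable def objective {n : ℕ} (u c : Finset (Fin n) → ℝ) (L : List (Fin n)) : ℝ :=
  ∑ i ∈ Finset.range L.length,
    c (prefSet L (i + 1)) * (u (prefSet L (i + 1)) - u (prefSet L i))

/-- The element in (1-indexed) position `k` of the list `L`. -/
def elemAt {n : ℕ} [NeZero n] (L : List (Fin n)) (k : ℕ) : Fin n := L.getD (k - 1) default

/-- The quantity `b_{ij} = u(o_i | O_{i-1} ∪ L_{j-1}) - u(o_i | O_{i-1} ∪ L_{j-1} ∪ {l_j})`. -/
noncomputable def bmat {n : ℕ} [NeZero n] (u : Finset (Fin n) → ℝ) (L O : List (Fin n))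
    (i j : ℕ) : ℝ :=
  marg u (elemAt O i) (prefSet O (i - 1) ∪ prefSet L (j - 1)) -
    marg u (elemAt O i) (insert (elemAt L j) (prefSet O (i - 1) ∪ prefSet L (j - 1)))

/-- Monotone set function. -/
def Mono {n : ℕ} (f : Finset (Fin n) → ℝ) : Prop :=
  ∀ S : Finset (Fin n), ∀ i : Fin n, f S ≤ f (insert i S)

/-- Submodular set function. -/
def Submod {n : ℕ} (f : Finset (Fin n) → ℝ) : Prop :=
  ∀ S : Finset (Fin n), ∀ i j : Fin n, i ∉ S → j ∉ S →
    marg f i (insert j S) ≤ marg f i S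

/-- Second-order supermodular set function. -/
def SOSupermod {n : ℕ} (f : Finset (Fin n) → ℝ) : Prop :=
  ∀ S : Finset (Fin n), ∀ i j k : Fin n, i ∉ S → j ∉ S → k ∉ S →
    marg f i (insert k S) - marg f i (insert j (insert k S)) ≤
      marg f i S - marg f i (insert j S)

/-- Objective value of a length-(n+1) pseudo-neighbor sequence, where costs are
counted with multiplicity via the singleton costs `cs`. -/
noncomputable def pseudoObj {n : ℕ} (u : Finset (Fin n) → ℝ) (cs : Fin n → ℝ)
    (P : List (Fin n)) : ℝ :=
  ∑ k ∈ Finset.range P.length,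
    (((P.take (k + 1)).map cs).sum) * (u (prefSet P (k + 1)) - u (prefSet P k))

/-- The pseudo-neighbor of `L` obtained by inserting a second copy of the element in
(1-indexed) position `i` at (1-indexed) position `j`. -/
def pseudoNeighbor {n : ℕ} [NeZero n] (L : List (Fin n)) (i j : ℕ) : List (Fin n) :=
  L.insertIdx (j - 1) (elemAt L i)

/-- `L` is locally optimal with respect to insertions: no pseudo-neighbor has strictly
smaller objective value. -/
def LocallyOptimalInsertions {n : ℕ} [NeZero n] (u c : Finset (Fin n) → ℝ) (cs : Fin n → ℝ)
    (L : List (Fin n)) : Prop :=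
  ∀ i j : ℕ, 1 ≤ j → j < i → i ≤ n →
    objective u c L ≤ pseudoObj u cs (pseudoNeighbor L i j)

/-- The list obtained from `L` by removing the element in (1-indexed) position `i` and
reinserting it at (1-indexed) position `j`. -/
def moveList {n : ℕ} [NeZero n] (L : List (Fin n)) (i j : ℕ) : List (Fin n) :=
  (L.eraseIdx (i - 1)).insertIdx (j - 1) (elemAt L i)

/-- `L'` is a move-neighbor of `L`. -/
def IsMoveNeighbor {n : ℕ} [NeZero n] (L L' : List (Fin n)) : Prop :=
  ∃ i j : ℕ, 1 ≤ i ∧ i ≤ n ∧ 1 ≤ j ∧ j ≤ n ∧ i ≠ j ∧ L' = moveList L i j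

/-! ### Auxiliary lemmas -/

section AuxHelpers
variable {n : ℕ}

lemma marg_of_mem (f : Finset (Fin n) → ℝ) {e : Fin n} {S : Finset (Fin n)} (h : e ∈ S) :
    marg f e S = 0 := by simp [marg, Finset.insert_eq_self.2 h]

lemma mono_union {f : Finset (Fin n) → ℝ} (hf : Mono f) (S X : Finset (Fin n)) :
    f S ≤ f (S ∪ X) := by
  induction X using Finset.induction_on with
  | empty => simp
  | @insert k X hk ih => rw [Finset.union_insert]; exact ih.trans (hf _ k)

lemma mono_subset {f : Finset (Fin n) → ℝ} (hf : Mono f) {S T : Finset (Fin n)} (h : S ⊆ T) :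
    f S ≤ f T := by
  have := mono_union hf S T
  rwa [Finset.union_eq_right.2 h] at this

lemma submod_union {f : Finset (Fin n) → ℝ} (hf : Submod f) (A : Finset (Fin n)) (e : Fin n) :
    ∀ X : Finset (Fin n), e ∉ A ∪ X → marg f e (A ∪ X) ≤ marg f e A := by
  intro X
  induction X using Finset.induction_on with
  | empty => simp
  | @insert k X hk ih =>
    intro he
    simp only [Finset.mem_union, Finset.mem_insert, not_or] at he
    have he' : e ∉ A ∪ X := by simp only [Finset.mem_union]; tauto
    rw [Finset.union_insert]
    by_cases hkm : k ∈ A ∪ X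
    · rw [Finset.insert_eq_self.2 hkm]; exact ih he'
    · exact (hf (A ∪ X) e k he' hkm).trans (ih he')

lemma sos_union {f : Finset (Fin n) → ℝ} (hsos : SOSupermod f) (A : Finset (Fin n))
    (e l : Fin n) :
    ∀ X : Finset (Fin n), e ∉ A ∪ X → l ∉ A ∪ X →
      marg f e (A ∪ X) - marg f e (insert l (A ∪ X)) ≤
        marg f e A - marg f e (insert l A) := by
  intro X
  induction X using Finset.induction_on with
  | empty => simp
  | @insert k X hk ih =>
    intro he hl
    simp only [Finset.mem_union, Finset.mem_insert, not_or] at he hl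
    have he' : e ∉ A ∪ X := by simp only [Finset.mem_union]; tauto
    have hl' : l ∉ A ∪ X := by simp only [Finset.mem_union]; tauto
    rw [Finset.union_insert]
    by_cases hkm : k ∈ A ∪ X
    · rw [Finset.insert_eq_self.2 hkm]; exact ih he' hl'
    · exact (hsos (A ∪ X) e l k he' hl' hkm).trans (ih he' hl')

lemma key_marg {f : Finset (Fin n) → ℝ} (hsub : Submod f) (hsos : SOSupermod f)
    (A X : Finset (Fin n)) (e l : Fin n) (hl : l ∉ A) :
    marg f e (A ∪ X) - marg f e (insert l (A ∪ X)) ≤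
      marg f e A - marg f e (insert l A) := by
  by_cases heA : e ∈ A
  · rw [marg_of_mem f heA, marg_of_mem f (Finset.mem_insert_of_mem heA),
      marg_of_mem f (Finset.mem_union_left X heA),
      marg_of_mem f (Finset.mem_insert_of_mem (Finset.mem_union_left X heA))]
  · have hRHS : 0 ≤ marg f e A - marg f e (insert l A) :=
      sub_nonneg.2 (hsub A e l heA hl)
    by_cases heX : e ∈ A ∪ X
    · rw [marg_of_mem f heX, marg_of_mem f (Finset.mem_insert_of_mem heX)]
      simpa using hRHS
    · by_cases hlX : l ∈ A ∪ X
      · rw [Finset.insert_eq_self.2 hlX, sub_self]; exact hRHS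
      · by_cases hel : e = l
        · subst hel
          rw [marg_of_mem f (Finset.mem_insert_self e (A ∪ X)),
            marg_of_mem f (Finset.mem_insert_self e A)]
          simpa using submod_union hsub A e X heX
        · exact sos_union hsos A e l X heX hlX

lemma prefSet_zero (L : List (Fin n)) : prefSet L 0 = ∅ := by simp [prefSet]

lemma prefSet_mono (L : List (Fin n)) {a b : ℕ} (h : a ≤ b) : prefSet L a ⊆ prefSet L b := by
  intro x hx
  simp only [prefSet, List.mem_toFinset] at *
  have e : L.take a = (L.take b).take a := by rw [List.take_take, min_eq_left h]
  rw [e] at hx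
  exact List.take_subset _ _ hx

lemma prefSet_full (L : List (Fin n)) {k : ℕ} (h : L.length ≤ k) :
    prefSet L k = L.toFinset := by
  simp [prefSet, List.take_of_length_le h]

lemma permList_toFinset {L : List (Fin n)} (hL : IsPermList L) : L.toFinset = Finset.univ := by
  ext x; simp [hL.2 x]

lemma permList_length {L : List (Fin n)} (hL : IsPermList L) : L.length = n := by
  have h2 := List.toFinset_card_of_nodup hL.1
  rw [permList_toFinset hL, Finset.card_univ, Fintype.card_fin] at h2
  omega

lemma prefSet_succ [NeZero n] (L : List (Fin n)) {r : ℕ} (h1 : 1 ≤ r) (h2 : r ≤ L.length) :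
    prefSet L r = insert (elemAt L r) (prefSet L (r - 1)) := by
  obtain ⟨k, rfl⟩ : ∃ k, r = k + 1 := ⟨r - 1, by omega⟩
  have hk : k < L.length := by omega
  simp only [prefSet, elemAt, Nat.add_sub_cancel]
  rw [List.getD_eq_getElem _ _ (by omega), List.take_succ,
    List.getElem?_eq_getElem hk, List.toFinset_append]
  ext x; simp [or_comm]

lemma elemAt_not_mem [NeZero n] {L : List (Fin n)} (hnd : L.Nodup) {r : ℕ} (h1 : 1 ≤ r)
    (h2 : r ≤ L.length) : elemAt L r ∉ prefSet L (r - 1) := by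
  obtain ⟨k, rfl⟩ : ∃ k, r = k + 1 := ⟨r - 1, by omega⟩
  have hk : k < L.length := by omega
  simp only [prefSet, elemAt, Nat.add_sub_cancel, List.mem_toFinset]
  rw [List.getD_eq_getElem _ _ (by omega)]
  intro hmem
  have hnd2 : (L.take k ++ L.drop k).Nodup := by rw [List.take_append_drop]; exact hnd
  rw [List.nodup_append] at hnd2
  have hmem2 : L[k] ∈ L.drop k := by
    have h0 : (L.drop k)[0]'(by simp [List.length_drop]; omega) = L[k] := by simp
    exact h0 ▸ List.getElem_mem _
  exact hnd2.2.2 _ hmem _ hmem2 rfl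

lemma cost_take (cs : Fin n → ℝ) (c : Finset (Fin n) → ℝ) (hc : ∀ S, c S = ∑ i ∈ S, cs i)
    (L : List (Fin n)) (hnd : L.Nodup) (k : ℕ) :
    ((L.take k).map cs).sum = c (prefSet L k) := by
  rw [hc, prefSet, List.sum_toFinset _ (hnd.sublist (List.take_sublist k L))]

lemma tele (g : ℕ → ℝ) : ∀ (m j : ℕ), 1 ≤ j → j ≤ m →
    ∑ r ∈ Finset.Icc j m, (g (r - 1) - g r) = g (j - 1) - g m := by
  intro m
  induction m with
  | zero => intro j h1 h2; omega
  | succ m ih =>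
    intro j h1 h2
    rcases Nat.lt_or_ge j (m + 1) with h | h
    · rw [Finset.sum_Icc_succ_top (by omega : j ≤ m + 1), ih j h1 (by omega)]
      simp only [Nat.add_sub_cancel]
      ring
    · have hj : j = m + 1 := by omega
      subst hj
      rw [Finset.Icc_self, Finset.sum_singleton]

lemma tele2 (g : ℕ → ℝ) (m j : ℕ) (h1 : 1 ≤ j) (h2 : j ≤ m) :
    ∑ r ∈ Finset.Icc j m, (g r - g (r - 1)) = g m - g (j - 1) := by
  have h := tele (fun r => -g r) m j h1 h2
  simp only [neg_sub_neg] at h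
  linarith [h]

lemma sum_Icc_one (g : ℕ → ℝ) (m : ℕ) :
    ∑ r ∈ Finset.Icc 1 m, g r = ∑ k ∈ Finset.range m, g (k + 1) := by
  induction m with
  | zero => simp
  | succ m ih => rw [Finset.sum_Icc_succ_top (by omega), ih, Finset.sum_range_succ]

lemma sum_Icc_shift (g : ℕ → ℝ) (a b : ℕ) :
    ∑ r ∈ Finset.Icc (a + 1) (b + 1), g r = ∑ r ∈ Finset.Icc a b, g (r + 1) := by
  rw [← Finset.image_add_right_Icc a b 1, Finset.sum_image (by intro x _ y _ h; simp only at h; omega)]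

lemma Icc_one_split (a m : ℕ) (h1 : 1 ≤ a) (h : a ≤ m + 1) (g : ℕ → ℝ) :
    ∑ r ∈ Finset.Icc 1 m, g r =
      ∑ r ∈ Finset.Icc 1 (a - 1), g r + ∑ r ∈ Finset.Icc a m, g r := by
  have e1 : Finset.Icc 1 (a - 1) = Finset.Ioc 0 (a - 1) := by
    ext x; simp only [Finset.mem_Icc, Finset.mem_Ioc]; omega
  have e2 : Finset.Icc a m = Finset.Ioc (a - 1) m := by
    ext x; simp only [Finset.mem_Icc, Finset.mem_Ioc]; omega
  have e3 : Finset.Icc 1 m = Finset.Ioc 0 m := by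
    ext x; simp only [Finset.mem_Icc, Finset.mem_Ioc]; omega
  rw [e1, e2, e3, Finset.sum_Ioc_consecutive _ (by omega) (by omega)]

lemma insertIdx_eq {α : Type*} (a : α) : ∀ (m : ℕ) (l : List α), m ≤ l.length →
    l.insertIdx m a = l.take m ++ a :: l.drop m
  | 0, l, _ => by simp
  | m + 1, [], h => by simp at h
  | m + 1, x :: l, h => by
    simp only [List.insertIdx_succ_cons, List.take_succ_cons, List.drop_succ_cons,
      List.cons_append]
    rw [insertIdx_eq a m l (by simpa using h)]

end AuxHelpers

theorem local_opt_constraint (n : ℕ) [NeZero n] (u c : Finset (Fin n) → ℝ) (cs : Fin n → ℝ)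
    (hu0 : u ∅ = 0) (hu_nonneg : ∀ S, 0 ≤ u S) (hu_mono : Mono u)
    (hu_sub : Submod u) (hu_sos : SOSupermod u)
    (hcs_pos : ∀ i, 0 < cs i) (hc : ∀ S, c S = ∑ i ∈ S, cs i)
    (L O : List (Fin n)) (hL : IsPermList L) (hO : IsPermList O)
    (hLopt : LocallyOptimalInsertions u c cs L)
    (hOopt : ∀ O', IsPermList O' → objective u c O ≤ objective u c O')
    (i j : ℕ) (hi1 : 1 ≤ i) (hin : i ≤ n) (hj1 : 1 ≤ j) (hjn : j ≤ n) :
    ∑ r ∈ Finset.Icc j n, c (prefSet L r) * ∑ s ∈ Finset.Icc 1 n, bmat u L O s r ≤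
      (c {elemAt O i} + c (prefSet L (j - 1))) * ∑ r ∈ Finset.Icc j n, bmat u L O i r +
        ∑ r ∈ Finset.Icc j n, (c {elemAt O i} + c (prefSet L r)) *
          ∑ s ∈ (Finset.Icc 1 n).erase i, bmat u L O s r := by
  classical
  have hn1 : 1 ≤ n := Nat.one_le_iff_ne_zero.mpr (NeZero.ne n)
  have hLlen : L.length = n := permList_length hL
  have hOlen : O.length = n := permList_length hO
  have hLuniv : prefSet L n = Finset.univ := by
    rw [prefSet_full L (le_of_eq hLlen), permList_toFinset hL]
  have hOuniv : prefSet O n = Finset.univ := by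
    rw [prefSet_full O (le_of_eq hOlen), permList_toFinset hO]
  set o : Fin n := elemAt O i with ho
  set m : ℕ → ℝ := fun r => marg u o (prefSet L r) with hm
  have hco : c {o} = cs o := by rw [hc]; simp
  have hbmat : ∀ s r : ℕ, 1 ≤ r → r ≤ n →
      bmat u L O s r =
        marg u (elemAt O s) (prefSet O (s - 1) ∪ prefSet L (r - 1)) -
          marg u (elemAt O s) (prefSet O (s - 1) ∪ prefSet L r) := by
    intro s r hr1 hr2
    unfold bmat
    rw [prefSet_succ L hr1 (by omega), Finset.union_insert]
  have hrow : ∀ s : ℕ, ∑ r ∈ Finset.Icc j n, bmat u L O s r =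
      marg u (elemAt O s) (prefSet O (s - 1) ∪ prefSet L (j - 1)) := by
    intro s
    set g : ℕ → ℝ := fun t => marg u (elemAt O s) (prefSet O (s - 1) ∪ prefSet L t) with hg
    have e : ∑ r ∈ Finset.Icc j n, bmat u L O s r =
        ∑ r ∈ Finset.Icc j n, (g (r - 1) - g r) := by
      refine Finset.sum_congr rfl fun r hr => ?_
      rw [Finset.mem_Icc] at hr
      simp only [hg]
      exact hbmat s r (by omega) hr.2
    rw [e, tele g n j hj1 hjn]
    have e2 : g n = 0 := by
      have euniv : prefSet O (s - 1) ∪ prefSet L n = Finset.univ := by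
        rw [hLuniv]
        exact Finset.union_eq_right.2 (Finset.subset_univ _)
      simp only [hg, euniv]
      exact marg_of_mem u (Finset.mem_univ _)
    rw [e2, sub_zero]
  have hdouble : ∑ r ∈ Finset.Icc j n, ∑ s ∈ Finset.Icc 1 n, bmat u L O s r =
      u Finset.univ - u (prefSet L (j - 1)) := by
    rw [Finset.sum_comm]
    set h : ℕ → ℝ := fun t => u (prefSet O t ∪ prefSet L (j - 1)) with hh
    have e : ∀ s ∈ Finset.Icc 1 n, ∑ r ∈ Finset.Icc j n, bmat u L O s r = h s - h (s - 1) := by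
      intro s hs
      rw [Finset.mem_Icc] at hs
      rw [hrow s]
      simp only [hh, marg]
      rw [prefSet_succ O hs.1 (by omega), Finset.insert_union]
    rw [Finset.sum_congr rfl e, tele2 h n 1 le_rfl hn1]
    simp only [hh]
    have e1 : prefSet O n ∪ prefSet L (j - 1) = Finset.univ := by
      rw [hOuniv]
      exact Finset.union_eq_left.2 (Finset.subset_univ _)
    have e2 : prefSet O (1 - 1) ∪ prefSet L (j - 1) = prefSet L (j - 1) := by
      norm_num [prefSet_zero]
    rw [e1, e2]
  obtain ⟨kp, hkplt, hkp⟩ := List.mem_iff_getElem.1 (hL.2 o)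
  have hp1 : 1 ≤ kp + 1 := by omega
  have hpn : kp + 1 ≤ n := by omega
  have hoL : elemAt L (kp + 1) = o := by
    rw [elemAt, Nat.add_sub_cancel, List.getD_eq_getElem _ _ (by omega)]
    exact hkp
  have hoAp : o ∈ prefSet L (kp + 1) := by
    rw [prefSet_succ L hp1 (by omega), hoL]
    exact Finset.mem_insert_self o _
  have Hbeta : ∑ r ∈ Finset.Icc j n,
        (c (prefSet L r) - c (prefSet L (j - 1))) * (m (r - 1) - m r)
      ≤ cs o * (u Finset.univ - u (prefSet L (j - 1))) := by
    rcases lt_trichotomy (kp + 1) j with hpj | hpj | hpj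
    · -- o appears strictly before position j in L
      have hzero : ∀ r ∈ Finset.Icc j n,
          (c (prefSet L r) - c (prefSet L (j - 1))) * (m (r - 1) - m r) = 0 := by
        intro r hr
        rw [Finset.mem_Icc] at hr
        have h1 : m (r - 1) = 0 := by
          simp only [hm]
          exact marg_of_mem u (prefSet_mono L (by omega) hoAp)
        have h2 : m r = 0 := by
          simp only [hm]
          exact marg_of_mem u (prefSet_mono L (by omega) hoAp)
        rw [h1, h2, sub_self, mul_zero]
      rw [Finset.sum_congr rfl hzero, Finset.sum_const_zero]
      apply mul_nonneg (hcs_pos o).le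
      exact sub_nonneg.2 (mono_subset hu_mono (Finset.subset_univ _))
    · -- o is exactly at position j in L
      have hoLj : elemAt L j = o := by rw [← hpj]; exact hoL
      have hAj : prefSet L j = insert o (prefSet L (j - 1)) := by
        rw [prefSet_succ L hj1 (by omega), hoLj]
      have honot : o ∉ prefSet L (j - 1) := by
        have h := elemAt_not_mem (L := L) hL.1 hj1 (by omega)
        rwa [hoLj] at h
      have hmj : ∀ r, j ≤ r → m r = 0 := by
        intro r hr
        simp only [hm]
        exact marg_of_mem u (prefSet_mono L hr (hAj ▸ Finset.mem_insert_self o _))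
      rw [Finset.sum_eq_single_of_mem j (Finset.mem_Icc.2 ⟨le_rfl, hjn⟩) ?_]
      · have hcoef : c (prefSet L j) - c (prefSet L (j - 1)) = cs o := by
          rw [hAj, hc, hc, Finset.sum_insert honot]; ring
        rw [hcoef, hmj j le_rfl, sub_zero]
        apply mul_le_mul_of_nonneg_left _ (hcs_pos o).le
        simp only [hm, marg]
        have h2 : u (insert o (prefSet L (j - 1))) ≤ u Finset.univ :=
          mono_subset hu_mono (Finset.subset_univ _)
        linarith
      · intro r hr hrj
        rw [Finset.mem_Icc] at hr
        rw [hmj r (by omega), hmj (r - 1) (by omega), sub_self, mul_zero]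
    · -- o appears strictly after position j : use local optimality
      have hopt := hLopt (kp + 1) j hj1 hpj hpn
      have hjlen : j - 1 ≤ L.length := by omega
      have hPdecomp : pseudoNeighbor L (kp + 1) j = L.take (j - 1) ++ o :: L.drop (j - 1) := by
        unfold pseudoNeighbor
        rw [hoL, insertIdx_eq o (j - 1) L hjlen]
      set P : List (Fin n) := pseudoNeighbor L (kp + 1) j with hPdef
      have hPlen : P.length = n + 1 := by
        rw [hPdecomp]
        simp only [List.length_append, List.length_cons, List.length_take, List.length_drop]
        omega
      have hlenTake : (L.take (j - 1)).length = j - 1 := by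
        rw [List.length_take]; omega
      have htakeL : ∀ k, j - 1 ≤ k →
          L.take k = L.take (j - 1) ++ (L.drop (j - 1)).take (k - (j - 1)) := by
        intro k hk
        conv_lhs => rw [← List.take_append_drop (j - 1) L]
        rw [List.take_append, List.take_take, min_eq_right (by omega), hlenTake]
      have htakeP1 : ∀ k, k ≤ j - 1 → P.take k = L.take k := by
        intro k hk
        rw [hPdecomp, List.take_append, List.take_take, min_eq_left hk,
          hlenTake, Nat.sub_eq_zero_of_le hk, List.take_zero, List.append_nil]
      have htakeP2 : ∀ k, j ≤ k →
          P.take k = L.take (j - 1) ++ o :: (L.drop (j - 1)).take (k - j) := by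
        intro k hk
        rw [hPdecomp, List.take_append, List.take_take,
          min_eq_right (by omega), hlenTake,
          show k - (j - 1) = (k - j) + 1 by omega, List.take_succ_cons]
      have hpre1 : ∀ k, k ≤ j - 1 → prefSet P k = prefSet L k := by
        intro k hk
        unfold prefSet
        rw [htakeP1 k hk]
      have hpre2 : ∀ k, j ≤ k → prefSet P k = insert o (prefSet L (k - 1)) := by
        intro k hk
        unfold prefSet
        rw [htakeP2 k hk, htakeL (k - 1) (by omega), show k - 1 - (j - 1) = k - j by omega]
        simp [List.toFinset_append, Finset.union_insert]
      have hw1 : ∀ k, k ≤ j - 1 → ((P.take k).map cs).sum = c (prefSet L k) := by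
        intro k hk
        rw [htakeP1 k hk, cost_take cs c hc L hL.1]
      have hw2 : ∀ k, j ≤ k → ((P.take k).map cs).sum = cs o + c (prefSet L (k - 1)) := by
        intro k hk
        have e1 : ((L.take (k - 1)).map cs).sum = c (prefSet L (k - 1)) :=
          cost_take cs c hc L hL.1 _
        rw [htakeL (k - 1) (by omega), show k - 1 - (j - 1) = k - j by omega] at e1
        rw [htakeP2 k hk]
        simp only [List.map_append, List.sum_append, List.map_cons, List.sum_cons] at *
        linarith
      have hobjL : objective u c L =
          ∑ r ∈ Finset.Icc 1 n, c (prefSet L r) * (u (prefSet L r) - u (prefSet L (r - 1))) := by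
        unfold objective
        rw [hLlen, sum_Icc_one (fun r => c (prefSet L r) * (u (prefSet L r) - u (prefSet L (r - 1)))) n]
        exact Finset.sum_congr rfl fun k _ => by simp
      have hobj_split : objective u c L =
          (∑ r ∈ Finset.Icc 1 (j - 1), c (prefSet L r) * (u (prefSet L r) - u (prefSet L (r - 1)))) +
            ∑ r ∈ Finset.Icc j n, c (prefSet L r) * (u (prefSet L r) - u (prefSet L (r - 1))) := by
        rw [hobjL, Icc_one_split j n hj1 (by omega)]
      have hpseudo : pseudoObj u cs P =
          (∑ r ∈ Finset.Icc 1 (j - 1), c (prefSet L r) * (u (prefSet L r) - u (prefSet L (r - 1)))) +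
            ((cs o + c (prefSet L (j - 1))) *
                (u (insert o (prefSet L (j - 1))) - u (prefSet L (j - 1))) +
              ∑ r ∈ Finset.Icc j n, (cs o + c (prefSet L r)) *
                (u (insert o (prefSet L r)) - u (insert o (prefSet L (r - 1))))) := by
        unfold pseudoObj
        rw [hPlen]
        have e0 : ∑ k ∈ Finset.range (n + 1),
              ((P.take (k + 1)).map cs).sum * (u (prefSet P (k + 1)) - u (prefSet P k))
            = ∑ r ∈ Finset.Icc 1 (n + 1),
              ((P.take r).map cs).sum * (u (prefSet P r) - u (prefSet P (r - 1))) := by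
          rw [sum_Icc_one (fun r => ((P.take r).map cs).sum * (u (prefSet P r) - u (prefSet P (r - 1)))) (n + 1)]
          exact Finset.sum_congr rfl fun k _ => by simp
        rw [e0, Icc_one_split j (n + 1) hj1 (by omega)]
        congr 1
        · refine Finset.sum_congr rfl fun r hr => ?_
          rw [Finset.mem_Icc] at hr
          rw [hw1 r (by omega), hpre1 r (by omega), hpre1 (r - 1) (by omega)]
        · have e1 : Finset.Icc j (n + 1) = insert j (Finset.Icc (j + 1) (n + 1)) := by
            ext x
            simp only [Finset.mem_Icc, Finset.mem_insert]
            omega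
          rw [e1, Finset.sum_insert (by simp only [Finset.mem_Icc]; omega)]
          congr 1
          · rw [hw2 j le_rfl, hpre2 j le_rfl, hpre1 (j - 1) le_rfl]
          · rw [sum_Icc_shift (fun r => ((P.take r).map cs).sum * (u (prefSet P r) - u (prefSet P (r - 1)))) j n]
            refine Finset.sum_congr rfl fun r hr => ?_
            rw [Finset.mem_Icc] at hr
            rw [hw2 (r + 1) (by omega), hpre2 (r + 1) (by omega), Nat.add_sub_cancel,
              hpre2 r (by omega)]
      rw [hobj_split, hpseudo] at hopt
      have hopt2 : ∑ r ∈ Finset.Icc j n, c (prefSet L r) * (u (prefSet L r) - u (prefSet L (r - 1)))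
          ≤ (cs o + c (prefSet L (j - 1))) * m (j - 1) +
            ∑ r ∈ Finset.Icc j n, (cs o + c (prefSet L r)) *
              (u (insert o (prefSet L r)) - u (insert o (prefSet L (r - 1)))) := by
        simp only [hm, marg]
        linarith
      have hSdU : ∑ r ∈ Finset.Icc j n, (u (prefSet L r) - u (prefSet L (r - 1)))
          = u Finset.univ - u (prefSet L (j - 1)) := by
        have t : ∑ r ∈ Finset.Icc j n, (u (prefSet L r) - u (prefSet L (r - 1)))
            = u (prefSet L n) - u (prefSet L (j - 1)) := tele2 (fun t => u (prefSet L t)) n j hj1 hjn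
        rw [t, hLuniv]
      have hSb : ∑ r ∈ Finset.Icc j n, (m (r - 1) - m r) = m (j - 1) := by
        rw [tele m n j hj1 hjn]
        have hmn : m n = 0 := by
          simp only [hm]
          exact marg_of_mem u (show o ∈ prefSet L n by rw [hLuniv]; exact Finset.mem_univ o)
        rw [hmn, sub_zero]
      have hexp : ∑ r ∈ Finset.Icc j n, (cs o + c (prefSet L r)) *
            (u (insert o (prefSet L r)) - u (insert o (prefSet L (r - 1))))
          = cs o * (u Finset.univ - u (prefSet L (j - 1)))
            + ∑ r ∈ Finset.Icc j n, c (prefSet L r) * (u (prefSet L r) - u (prefSet L (r - 1)))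
            - cs o * m (j - 1)
            - ∑ r ∈ Finset.Icc j n, c (prefSet L r) * (m (r - 1) - m r) := by
        have e : ∀ r ∈ Finset.Icc j n, (cs o + c (prefSet L r)) *
              (u (insert o (prefSet L r)) - u (insert o (prefSet L (r - 1))))
            = (cs o * (u (prefSet L r) - u (prefSet L (r - 1)))
                + c (prefSet L r) * (u (prefSet L r) - u (prefSet L (r - 1))))
              - (cs o * (m (r - 1) - m r) + c (prefSet L r) * (m (r - 1) - m r)) := by
          intro r _
          simp only [hm, marg]
          ring
        rw [Finset.sum_congr rfl e, Finset.sum_sub_distrib, Finset.sum_add_distrib,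
          Finset.sum_add_distrib, ← Finset.mul_sum, ← Finset.mul_sum, hSdU, hSb]
        ring
      have hXfin : ∑ r ∈ Finset.Icc j n,
            (c (prefSet L r) - c (prefSet L (j - 1))) * (m (r - 1) - m r)
          = ∑ r ∈ Finset.Icc j n, c (prefSet L r) * (m (r - 1) - m r)
            - c (prefSet L (j - 1)) * m (j - 1) := by
        have e : ∀ r ∈ Finset.Icc j n,
            (c (prefSet L r) - c (prefSet L (j - 1))) * (m (r - 1) - m r)
              = c (prefSet L r) * (m (r - 1) - m r)
                - c (prefSet L (j - 1)) * (m (r - 1) - m r) := fun r _ => by ring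
        rw [Finset.sum_congr rfl e, Finset.sum_sub_distrib, ← Finset.mul_sum, hSb]
      rw [hXfin]
      rw [hexp] at hopt2
      have hq : (cs o + c (prefSet L (j - 1))) * m (j - 1)
          = cs o * m (j - 1) + c (prefSet L (j - 1)) * m (j - 1) := add_mul _ _ _
      rw [hq] at hopt2
      linarith
  have Hble : ∀ r ∈ Finset.Icc j n, bmat u L O i r ≤ m (r - 1) - m r := by
    intro r hr
    rw [Finset.mem_Icc] at hr
    have h1 : 1 ≤ r := by omega
    have h2 : r ≤ n := by omega
    have hins : prefSet L r = insert (elemAt L r) (prefSet L (r - 1)) :=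
      prefSet_succ L h1 (by omega)
    have hnotmem : elemAt L r ∉ prefSet L (r - 1) := elemAt_not_mem hL.1 h1 (by omega)
    have hk := key_marg hu_sub hu_sos (prefSet L (r - 1)) (prefSet O (i - 1)) o
      (elemAt L r) hnotmem
    rw [hbmat i r h1 h2]
    simp only [hm]
    calc marg u o (prefSet O (i - 1) ∪ prefSet L (r - 1)) -
          marg u o (prefSet O (i - 1) ∪ prefSet L r)
        = marg u o (prefSet L (r - 1) ∪ prefSet O (i - 1)) -
            marg u o (insert (elemAt L r) (prefSet L (r - 1) ∪ prefSet O (i - 1))) := by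
          rw [hins, Finset.union_insert, Finset.union_comm (prefSet O (i - 1)) (prefSet L (r - 1))]
      _ ≤ marg u o (prefSet L (r - 1)) - marg u o (insert (elemAt L r) (prefSet L (r - 1))) := hk
      _ = marg u o (prefSet L (r - 1)) - marg u o (prefSet L r) := by rw [← hins]
  have Hcoef : ∀ r ∈ Finset.Icc j n, 0 ≤ c (prefSet L r) - c (prefSet L (j - 1)) := by
    intro r hr
    rw [Finset.mem_Icc] at hr
    rw [hc, hc, sub_nonneg]
    exact Finset.sum_le_sum_of_subset_of_nonneg (prefSet_mono L (by omega))
      (fun x _ _ => (hcs_pos x).le)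
  have H1 : ∑ r ∈ Finset.Icc j n, (c (prefSet L r) - c (prefSet L (j - 1))) * bmat u L O i r
      ≤ cs o * (u Finset.univ - u (prefSet L (j - 1))) := by
    refine le_trans (Finset.sum_le_sum fun r hr => ?_) Hbeta
    exact mul_le_mul_of_nonneg_left (Hble r hr) (Hcoef r hr)
  have hmemI : i ∈ Finset.Icc 1 n := Finset.mem_Icc.2 ⟨hi1, hin⟩
  have hsplitT : ∀ r : ℕ, ∑ s ∈ Finset.Icc 1 n, bmat u L O s r
      = bmat u L O i r + ∑ s ∈ (Finset.Icc 1 n).erase i, bmat u L O s r :=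
    fun r => (Finset.add_sum_erase _ _ hmemI).symm
  have hT : ∑ r ∈ Finset.Icc j n, ∑ s ∈ (Finset.Icc 1 n).erase i, bmat u L O s r
      = (u Finset.univ - u (prefSet L (j - 1))) - ∑ r ∈ Finset.Icc j n, bmat u L O i r := by
    have hd := hdouble
    rw [Finset.sum_congr rfl (fun r _ => hsplitT r), Finset.sum_add_distrib] at hd
    linarith
  have H1' : ∑ r ∈ Finset.Icc j n, c (prefSet L r) * bmat u L O i r
      - c (prefSet L (j - 1)) * ∑ r ∈ Finset.Icc j n, bmat u L O i r
      ≤ cs o * (u Finset.univ - u (prefSet L (j - 1))) := by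
    have e : ∀ r ∈ Finset.Icc j n, (c (prefSet L r) - c (prefSet L (j - 1))) * bmat u L O i r
        = c (prefSet L r) * bmat u L O i r
          - c (prefSet L (j - 1)) * bmat u L O i r := fun r _ => by ring
    rw [Finset.sum_congr rfl e, Finset.sum_sub_distrib, ← Finset.mul_sum] at H1
    exact H1
  have egoal1 : ∑ r ∈ Finset.Icc j n, c (prefSet L r) * ∑ s ∈ Finset.Icc 1 n, bmat u L O s r
      = ∑ r ∈ Finset.Icc j n, c (prefSet L r) * bmat u L O i r
        + ∑ r ∈ Finset.Icc j n, c (prefSet L r) *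
            ∑ s ∈ (Finset.Icc 1 n).erase i, bmat u L O s r := by
    rw [← Finset.sum_add_distrib]
    exact Finset.sum_congr rfl fun r _ => by rw [hsplitT r, mul_add]
  have egoal2 : ∑ r ∈ Finset.Icc j n, (cs o + c (prefSet L r)) *
        ∑ s ∈ (Finset.Icc 1 n).erase i, bmat u L O s r
      = cs o * ∑ r ∈ Finset.Icc j n, ∑ s ∈ (Finset.Icc 1 n).erase i, bmat u L O s r
        + ∑ r ∈ Finset.Icc j n, c (prefSet L r) *
            ∑ s ∈ (Finset.Icc 1 n).erase i, bmat u L O s r := by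
    rw [Finset.mul_sum, ← Finset.sum_add_distrib]
    exact Finset.sum_congr rfl fun r _ => by ring
  rw [hco, egoal1, egoal2, hT, add_mul, mul_sub]
  linarith [H1']
end

section
/- Suppose u : 2^[n] → ℝ≥0 is a normalized, monotone set function and c : 2^[n] → ℝ≥0 is modular with positive singleton costs. Let π be a permutation of [n], let i > j be positions, and let π″ be the pseudo-neighbor of π obtained by inserting a second copy of the element in position i at position j. Then the move-neighbor of π obtained by removing the element in position i and reinserting it at position j has objective value at most the objective value of π″. Consequently, if π is locally optimal with respect to moves, then π is locally optimal with respect to insertions. -/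
open Finset

lemma myInsertIdx_len_append {α : Type*} (l1 l2 : List α) (a : α) :
    (l1 ++ l2).insertIdx l1.length a = l1 ++ a :: l2 := by
  induction l1 with
  | nil => rfl
  | cons x xs ih => simpa [List.insertIdx_succ_cons] using ih

lemma myEraseIdx_len_append {α : Type*} (l1 l2 : List α) (a : α) :
    (l1 ++ a :: l2).eraseIdx l1.length = l1 ++ l2 := by
  rw [List.eraseIdx_eq_take_drop_succ]
  have h1 : (l1 ++ a :: l2).take l1.length = l1 := by
    simpa using List.take_append (l₁ := l1) (l₂ := a :: l2) 0
  have h2 : (l1 ++ a :: l2).drop (l1.length + 1) = l2 := by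
    simpa using List.drop_append (l₁ := l1) (l₂ := a :: l2) 1
  rw [h1, h2]

lemma mySum_range_add (f : ℕ → ℝ) (a b : ℕ) :
    ∑ k ∈ Finset.range (a + b), f k =
      ∑ k ∈ Finset.range a, f k + ∑ k ∈ Finset.range b, f (a + k) := by
  induction b with
  | zero => simp
  | succ b ih => rw [Nat.add_succ, Finset.sum_range_succ, Finset.sum_range_succ, ih]; ring

lemma u_pref_step {n : ℕ} {u : Finset (Fin n) → ℝ} (hu_mono : Mono u)
    (L : List (Fin n)) (k : ℕ) : u (prefSet L k) ≤ u (prefSet L (k + 1)) := by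
  unfold prefSet
  rw [List.take_succ]
  cases h : L[k]? with
  | none => simp
  | some a =>
    have h2 : (L.take k ++ (some a).toList).toFinset = insert a (L.take k).toFinset := by
      ext x; simp [or_comm]
    rw [h2]
    exact hu_mono _ _

lemma key_lemma (n : ℕ) [NeZero n]
    (u c : Finset (Fin n) → ℝ) (cs : Fin n → ℝ)
    (hu_mono : Mono u)
    (hcs_pos : ∀ i, 0 < cs i) (hc : ∀ S, c S = ∑ i ∈ S, cs i)
    (π : List (Fin n)) (hπ : IsPermList π)
    (i j : ℕ) (hj1 : 1 ≤ j) (hji : j < i) (hin : i ≤ n) :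
    objective u c (moveList π i j) ≤ pseudoObj u cs (pseudoNeighbor π i j) := by
  obtain ⟨hnd, hall⟩ := hπ
  have hlen : π.length = n := by
    have h1 : π.toFinset = Finset.univ := Finset.eq_univ_iff_forall.mpr (by simpa using hall)
    have h2 := List.toFinset_card_of_nodup hnd
    rw [h1] at h2
    simpa using h2.symm
  have hi' : i - 1 < π.length := by omega
  set e := elemAt π i with he
  have heget : e = π[i-1] := by
    rw [he]; unfold elemAt; exact List.getD_eq_getElem π default hi'
  set A := π.take (j-1) with hA
  set B := (π.take (i-1)).drop (j-1) with hB
  set C := π.drop i with hCdef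
  have hAlen : A.length = j - 1 := by
    rw [hA, List.length_take]; omega
  have hBlen : B.length = (i-1) - (j-1) := by
    rw [hB, List.length_drop, List.length_take]; omega
  have hClen : C.length = n - i := by
    rw [hCdef, List.length_drop]; omega
  have hπeq : π = (A ++ B) ++ e :: C := by
    have h1 : A ++ B = π.take (i-1) := by
      rw [hA, hB, show List.take (j-1) π = (List.take (i-1) π).take (j-1) from by
        rw [List.take_take, min_eq_left (by omega : j - 1 ≤ i - 1)]]
      exact List.take_append_drop _ _
    have h2 : e :: C = π.drop (i-1) := by
      rw [List.drop_eq_getElem_cons hi', ← heget]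
      congr 1
      rw [hCdef]
      congr 1
      omega
    rw [h1, h2, List.take_append_drop]
  have hABlen : (A ++ B).length = i - 1 := by
    rw [List.length_append, hAlen, hBlen]; omega
  have hP : pseudoNeighbor π i j = (A ++ e :: B) ++ e :: C := by
    unfold pseudoNeighbor
    rw [← he]
    conv_lhs => rw [hπeq]
    have hassoc : (A ++ B) ++ e :: C = A ++ (B ++ e :: C) := by simp
    rw [hassoc, show j - 1 = A.length from hAlen.symm, myInsertIdx_len_append]
    simp
  have hM : moveList π i j = (A ++ e :: B) ++ C := by
    unfold moveList
    rw [← he]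
    conv_lhs => rw [hπeq]
    rw [show i - 1 = (A ++ B).length from hABlen.symm, myEraseIdx_len_append]
    have hassoc : A ++ B ++ C = A ++ (B ++ C) := by simp
    rw [hassoc, show j - 1 = A.length from hAlen.symm, myInsertIdx_len_append]
    simp
  set X := A ++ e :: B with hX
  have hXlen : X.length = i := by
    rw [hX, List.length_append, List.length_cons, hAlen, hBlen]; omega
  have hMlen : (moveList π i j).length = n := by
    rw [hM, List.length_append, hXlen, hClen]; omega
  have hPlen : (pseudoNeighbor π i j).length = n + 1 := by
    rw [hP, List.length_append, hXlen, List.length_cons, hClen]; omega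
  -- take computations
  have hMtake : ∀ m : ℕ, (moveList π i j).take (i + m) = X ++ C.take m := by
    intro m
    rw [hM, show i + m = X.length + m from by rw [hXlen], List.take_length_add_append]
  have hPtake : ∀ m : ℕ, (pseudoNeighbor π i j).take (i + (m+1)) = X ++ e :: C.take m := by
    intro m
    rw [hP, show i + (m+1) = X.length + (m+1) from by rw [hXlen], List.take_length_add_append,
      List.take_succ_cons]
  have hπtake : ∀ m : ℕ, π.take (i + m) = (A ++ B) ++ e :: C.take m := by
    intro m
    conv_lhs => rw [hπeq]
    rw [show i + m = (A ++ B).length + (m+1) from by omega, List.take_length_add_append,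
      List.take_succ_cons]
  have hPMtake : ∀ m, m ≤ i → (pseudoNeighbor π i j).take m = (moveList π i j).take m := by
    intro m hm
    have h1 : (pseudoNeighbor π i j).take m = X.take m := by
      rw [hP, List.take_append, hXlen, show m - i = 0 from by omega]
      simp
    have h2 : (moveList π i j).take m = X.take m := by
      rw [hM, List.take_append, hXlen, show m - i = 0 from by omega]
      simp
    rw [h1, h2]
  -- prefSet facts
  have hprefM : ∀ m : ℕ, prefSet (moveList π i j) (i + m) = prefSet π (i + m) := by
    intro m
    unfold prefSet
    rw [hMtake, hπtake, hX]
    ext x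
    simp
  have hprefP : ∀ m : ℕ, prefSet (pseudoNeighbor π i j) (i + (m+1)) = prefSet π (i + m) := by
    intro m
    unfold prefSet
    rw [hPtake, hπtake, hX]
    ext x
    simp
  have hprefPi : prefSet (pseudoNeighbor π i j) i = prefSet π i := by
    have h1 : (pseudoNeighbor π i j).take i = X := by
      rw [hP, List.take_append, hXlen, show i - i = 0 from by omega]
      simp [List.take_of_length_le hXlen.le]
    unfold prefSet
    rw [h1]
    have h2 := hπtake 0
    rw [show i + 0 = i from rfl] at h2
    rw [h2, hX]
    ext x
    simp
  -- nodup facts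
  have hMperm : List.Perm (moveList π i j) π := by
    rw [hM]
    conv_rhs => rw [hπeq]
    have h1 : (A ++ e :: B) ++ C = A ++ (e :: (B ++ C)) := by simp
    have h2 : (A ++ B) ++ e :: C = A ++ (B ++ e :: C) := by simp
    rw [h1, h2]
    exact List.Perm.append_left A List.perm_middle.symm
  have hMnd : (moveList π i j).Nodup := hMperm.nodup_iff.mpr hnd
  have costM : ∀ m : ℕ,
      c (prefSet (moveList π i j) m) = (((moveList π i j).take m).map cs).sum := by
    intro m
    rw [hc]
    exact List.sum_toFinset cs (hMnd.sublist (List.take_sublist m _))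
  have costπ : ∀ m : ℕ, c (prefSet π m) = ((π.take m).map cs).sum := by
    intro m
    rw [hc]
    exact List.sum_toFinset cs (hnd.sublist (List.take_sublist m _))
  have costP : ∀ m : ℕ, (((pseudoNeighbor π i j).take (i + (m+1))).map cs).sum
      = cs e + ((π.take (i + m)).map cs).sum := by
    intro m
    rw [hPtake, hπtake, hX]
    simp only [List.map_append, List.map_cons, List.sum_append, List.sum_cons]
    ring
  -- main computation
  set r := n - i with hr
  have hMlen' : (moveList π i j).length = i + r := by rw [hMlen]; omega
  have hPlen' : (pseudoNeighbor π i j).length = i + (r + 1) := by rw [hPlen]; omega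
  unfold objective pseudoObj
  rw [hMlen', hPlen', mySum_range_add, mySum_range_add, Finset.sum_range_succ']
  have part1 : ∑ k ∈ Finset.range i,
      c (prefSet (moveList π i j) (k + 1)) *
        (u (prefSet (moveList π i j) (k + 1)) - u (prefSet (moveList π i j) k))
      = ∑ k ∈ Finset.range i,
      (((pseudoNeighbor π i j).take (k + 1)).map cs).sum *
        (u (prefSet (pseudoNeighbor π i j) (k + 1)) - u (prefSet (pseudoNeighbor π i j) k)) := by
    apply Finset.sum_congr rfl
    intro k hk
    rw [Finset.mem_range] at hk
    have h1 := hPMtake (k+1) (by omega)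
    have h2 := hPMtake k (by omega)
    have hp1 : prefSet (pseudoNeighbor π i j) (k+1) = prefSet (moveList π i j) (k+1) := by
      unfold prefSet; rw [h1]
    have hp2 : prefSet (pseudoNeighbor π i j) k = prefSet (moveList π i j) k := by
      unfold prefSet; rw [h2]
    rw [hp1, hp2, h1, costM (k+1)]
  have part0 : (((pseudoNeighbor π i j).take (i + 0 + 1)).map cs).sum *
      (u (prefSet (pseudoNeighbor π i j) (i + 0 + 1)) -
        u (prefSet (pseudoNeighbor π i j) (i + 0))) = 0 := by
    have h1 : prefSet (pseudoNeighbor π i j) (i + 0 + 1) = prefSet π i := by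
      have h := hprefP 0
      simpa using h
    have h2 : prefSet (pseudoNeighbor π i j) (i + 0) = prefSet π i := by simpa using hprefPi
    rw [h1, h2]
    ring
  have part2 : ∀ k ∈ Finset.range r,
      c (prefSet (moveList π i j) (i + k + 1)) *
        (u (prefSet (moveList π i j) (i + k + 1)) - u (prefSet (moveList π i j) (i + k)))
      ≤ (((pseudoNeighbor π i j).take (i + (k + 1) + 1)).map cs).sum *
        (u (prefSet (pseudoNeighbor π i j) (i + (k + 1) + 1)) -
          u (prefSet (pseudoNeighbor π i j) (i + (k + 1)))) := by
    intro k _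
    have e1 : prefSet (moveList π i j) (i + k + 1) = prefSet π (i + k + 1) := hprefM (k+1)
    have e2 : prefSet (moveList π i j) (i + k) = prefSet π (i + k) := hprefM k
    have e3 : prefSet (pseudoNeighbor π i j) (i + (k + 1) + 1) = prefSet π (i + k + 1) :=
      hprefP (k+1)
    have e4 : prefSet (pseudoNeighbor π i j) (i + (k + 1)) = prefSet π (i + k) := hprefP k
    have e5 : (((pseudoNeighbor π i j).take (i + (k + 1) + 1)).map cs).sum
        = cs e + ((π.take (i + k + 1)).map cs).sum := costP (k+1)
    rw [e1, e2, e3, e4, e5]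
    have hΔ : 0 ≤ u (prefSet π (i + k + 1)) - u (prefSet π (i + k)) := by
      have h := u_pref_step hu_mono π (i + k)
      linarith
    have hcost : c (prefSet π (i + k + 1)) ≤ cs e + ((π.take (i + k + 1)).map cs).sum := by
      rw [costπ]
      have := hcs_pos e
      linarith
    exact mul_le_mul_of_nonneg_right hcost hΔ
  rw [part1, part0]
  have hsum := Finset.sum_le_sum part2
  linarith

theorem move_neighbor_le_pseudo_neighbor (n : ℕ) [NeZero n]
    (u c : Finset (Fin n) → ℝ) (cs : Fin n → ℝ)
    (hu0 : u ∅ = 0) (hu_nonneg : ∀ S, 0 ≤ u S) (hu_mono : Mono u)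
    (hcs_pos : ∀ i, 0 < cs i) (hc : ∀ S, c S = ∑ i ∈ S, cs i)
    (π : List (Fin n)) (hπ : IsPermList π)
    (i j : ℕ) (hj1 : 1 ≤ j) (hji : j < i) (hin : i ≤ n) :
    objective u c (moveList π i j) ≤ pseudoObj u cs (pseudoNeighbor π i j) ∧
      ((∀ L', IsMoveNeighbor π L' → objective u c π ≤ objective u c L') →
        LocallyOptimalInsertions u c cs π) := by
  constructor
  · exact key_lemma n u c cs hu_mono hcs_pos hc π hπ i j hj1 hji hin
  · intro h i0 j0 h1 h2 h3
    refine le_trans (h (moveList π i0 j0) ⟨i0, j0, by omega, h3, h1, by omega, by omega, rfl⟩)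
      (key_lemma n u c cs hu_mono hcs_pos hc π hπ i0 j0 h1 h2 h3)
end
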